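/- Let k ≥ 1, let y ∈ {0, …, k−1}, and let η ∈ [0, 1]. Let P be the k×k matrix |y⟩⟨y| (entry 1 in position (y, y), zero elsewhere), let M be the k×k diagonal matrix with entry 1 in position (y, y) and 1−η elsewhere on the diagonal, let N be the k×k diagonal matrix with entry 0 in position (y, y) and √(2η − η²) elsewhere on the diagonal, let Z = [[1, 0], [0, −1]] and X = [[0, 1], [1, 0]], and set V = (1−η)·Z + √(2η − η²)·X. Then M ⊗ Z + N ⊗ X = (I_k ⊗ V) · ( P ⊗ (V·Z) + (I_k − P) ⊗ I₂ ), where I_k and I₂ are identity matrices of sizes k and 2 and ⊗ is the Kronecker product. -/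

import Mathlib

open Matrix
open scoped Kronecker

/-- The decomposition of the target-oriented perturbation unitary:
`M ⊗ Z + N ⊗ X = (I ⊗ V)·(P ⊗ (V·Z) + (I − P) ⊗ I)` where
`V = (1−η)·Z + √(2η−η²)·X` and `P = |y⟩⟨y|`. -/
theorem target_perturbation_decomposition (k : ℕ) (hk : 1 ≤ k) (y : Fin k)
    (η : ℝ) (hη : η ∈ Set.Icc (0 : ℝ) 1)
    (P M N : Matrix (Fin k) (Fin k) ℂ)
    (hP : P = Matrix.single y y (1 : ℂ))
    (hM : M = Matrix.diagonal fun i => if i = y then (1 : ℂ) else ((1 - η : ℝ) : ℂ))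
    (hN : N = Matrix.diagonal fun i =>
      if i = y then (0 : ℂ) else ((Real.sqrt (2 * η - η ^ 2) : ℝ) : ℂ))
    (Z X V : Matrix (Fin 2) (Fin 2) ℂ)
    (hZ : Z = !![1, 0; 0, -1]) (hX : X = !![0, 1; 1, 0])
    (hV : V = ((1 - η : ℝ) : ℂ) • Z + ((Real.sqrt (2 * η - η ^ 2) : ℝ) : ℂ) • X) :
    M ⊗ₖ Z + N ⊗ₖ X =
      ((1 : Matrix (Fin k) (Fin k) ℂ) ⊗ₖ V) *
        (P ⊗ₖ (V * Z) + ((1 : Matrix (Fin k) (Fin k) ℂ) - P) ⊗ₖ (1 : Matrix (Fin 2) (Fin 2) ℂ)) := by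
  obtain ⟨h0, h1⟩ := hη
  have hpos : (0:ℝ) ≤ 2 * η - η ^ 2 := by nlinarith
  set c : ℂ := ((1 - η : ℝ) : ℂ) with hc_def
  set s : ℂ := ((Real.sqrt (2 * η - η ^ 2) : ℝ) : ℂ) with hs_def
  have hsC : s * s = ((2 * η - η ^ 2 : ℝ) : ℂ) := by
    rw [hs_def, ← Complex.ofReal_mul, Real.mul_self_sqrt hpos]
  have hcs : c * c + s * s = 1 := by
    rw [hsC, hc_def]; push_cast; ring
  clear_value c s
  have hVmat : V = !![c, s; s, -c] := by
    rw [hV, hZ, hX]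
    ext i j
    fin_cases i <;> fin_cases j <;> simp
  have hVV : V * V = 1 := by
    rw [hVmat]
    ext i j
    fin_cases i <;> fin_cases j <;>
      simp [Matrix.mul_apply, Fin.sum_univ_two, Matrix.one_apply] <;>
      first
        | linear_combination hcs
        | ring
  have hPd : P = Matrix.diagonal (fun i => if i = y then (1:ℂ) else 0) := by
    rw [hP]
    ext i j
    simp only [Matrix.single, Matrix.of_apply, Matrix.diagonal_apply]
    by_cases hij : i = j
    · subst hij
      by_cases hiy : i = y
      · subst hiy; simp
      · have hyi : ¬ y = i := fun h => hiy h.symm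
        simp [hiy, hyi]
    · have hno : ¬ (y = i ∧ y = j) := fun h => hij (h.1.symm.trans h.2)
      simp [hij, hno]
  have hMd : M = P + c • ((1 : Matrix (Fin k) (Fin k) ℂ) - P) := by
    rw [hM, hPd]
    ext i j
    by_cases hij : i = j
    · subst hij
      simp only [Matrix.diagonal_apply_eq, Matrix.add_apply, Matrix.smul_apply,
        Matrix.sub_apply, Matrix.one_apply_eq, smul_eq_mul]
      split_ifs <;> ring
    · simp [Matrix.diagonal_apply_ne _ hij, Matrix.one_apply_ne hij]
  have hNd : N = s • ((1 : Matrix (Fin k) (Fin k) ℂ) - P) := by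
    rw [hN, hPd]
    ext i j
    by_cases hij : i = j
    · subst hij
      simp only [Matrix.diagonal_apply_eq, Matrix.smul_apply,
        Matrix.sub_apply, Matrix.one_apply_eq, smul_eq_mul]
      split_ifs <;> ring
    · simp [Matrix.diagonal_apply_ne _ hij, Matrix.one_apply_ne hij]
  rw [mul_add, ← Matrix.mul_kronecker_mul, ← Matrix.mul_kronecker_mul,
    Matrix.one_mul, Matrix.mul_one, ← Matrix.mul_assoc, hVV, Matrix.one_mul,
    Matrix.one_mul, hMd, hNd, Matrix.add_kronecker, Matrix.smul_kronecker,
    Matrix.smul_kronecker, hV, Matrix.kronecker_add, Matrix.kronecker_smul,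
    Matrix.kronecker_smul, add_assoc]
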